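/- For every k ≥ 1, the reconfiguration distance in G^k between the shortest (s,t)-paths p^k_b and p^k_e is at most 11(2^k − 1); that is, there is a reconfiguration sequence from p^k_b to p^k_e of length at most 11(2^k − 1). -/

import Mathlib

/-- Vertices of the graph `G^k`: `s`, `t`, vertices `x^{ℓ+1}_{i+1}` (for `ℓ : Fin k`, `i : Fin 7`)
and `y^{ℓ+1}_{i+1}` (for `ℓ : Fin k`, `i : Fin 6`).  A value `ℓ : Fin k` encodes level `ℓ+1`,
and an index `i : Fin 7` (resp. `Fin 6`) encodes the subscript `i+1`. -/
inductive GVert (k : ℕ) : Type where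
  | s : GVert k
  | t : GVert k
  | x (ℓ : Fin k) (i : Fin 7) : GVert k
  | y (ℓ : Fin k) (i : Fin 6) : GVert k
deriving DecidableEq, Fintype

/-- The (oriented) edge relation generating the graph `G^k`. -/
def gkRel (k : ℕ) : GVert k → GVert k → Prop
  | GVert.s, GVert.x ℓ _ => (ℓ : ℕ) = k - 1
  | GVert.x ℓ i, GVert.y ℓ' i' => ℓ = ℓ' ∧ ((i : ℕ) = (i' : ℕ) ∨ (i : ℕ) = (i' : ℕ) + 1)
  | GVert.y ℓ i, GVert.x ℓ' j => (ℓ : ℕ) = (ℓ' : ℕ) + 1 ∧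
      (((i : ℕ) = 0 ∨ (i : ℕ) = 2 ∨ (i : ℕ) = 4) ∨
        ((i : ℕ) = 1 ∧ (j : ℕ) = 0) ∨ ((i : ℕ) = 3 ∧ (j : ℕ) = 6) ∨
        ((i : ℕ) = 5 ∧ (j : ℕ) = 0))
  | GVert.y ℓ _, GVert.t => (ℓ : ℕ) = 0
  | _, _ => False

/-- The graph `G^k`. -/
def Gk (k : ℕ) : SimpleGraph (GVert k) := SimpleGraph.fromRel (gkRel k)

/-- `p` is a shortest `(s,t)`-path in `H`, recorded as the sequence of its `L+1` vertices;
its length `L` is required to equal the distance between `s` and `t`. -/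
def IsShortestSTPath {V : Type*} (H : SimpleGraph V) (s t : V) (L : ℕ)
    (p : Fin (L + 1) → V) : Prop :=
  p 0 = s ∧ p (Fin.last L) = t ∧ (∀ i : Fin L, H.Adj (p i.castSucc) (p i.succ)) ∧
    L = H.dist s t

/-- Two vertex sequences differ in exactly one position. -/
def DiffOne {N : ℕ} {α : Type*} (p q : Fin N → α) : Prop :=
  ∃ i, p i ≠ q i ∧ ∀ j, j ≠ i → p j = q j

/-- `ρ 0, ρ 1, …, ρ ℓ` is a reconfiguration sequence of length `ℓ` from the shortest
`(s,t)`-path `p` to the shortest `(s,t)`-path `q`: all its members are shortest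
`(s,t)`-paths and consecutive members differ in exactly one position. -/
def SPReconfSeq {V : Type*} (H : SimpleGraph V) (s t : V) (L : ℕ)
    (ρ : ℕ → (Fin (L + 1) → V)) (ℓ : ℕ) (p q : Fin (L + 1) → V) : Prop :=
  ρ 0 = p ∧ ρ ℓ = q ∧ (∀ i ≤ ℓ, IsShortestSTPath H s t L (ρ i)) ∧
    ∀ i < ℓ, DiffOne (ρ i) (ρ (i + 1))

/-- The path `p^k_b = s, x^k_1, y^k_1, x^{k-1}_1, y^{k-1}_1, …, x^1_1, y^1_1, t`. -/
def pbG (k : ℕ) : Fin (2 * k + 1 + 1) → GVert k := fun d =>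
  if h0 : (d : ℕ) = 0 then GVert.s
  else if h1 : (d : ℕ) ≤ 2 * k then
    if (d : ℕ) % 2 = 1 then GVert.x ⟨k - 1 - ((d : ℕ) - 1) / 2, by omega⟩ ⟨0, by omega⟩
    else GVert.y ⟨k - 1 - ((d : ℕ) - 1) / 2, by omega⟩ ⟨0, by omega⟩
  else GVert.t

/-- The path `p^k_e = s, x^k_7, y^k_6, x^{k-1}_1, y^{k-1}_1, …, x^1_1, y^1_1, t`. -/
def peG (k : ℕ) (hk : 1 ≤ k) : Fin (2 * k + 1 + 1) → GVert k := fun d =>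
  if (d : ℕ) = 1 then GVert.x ⟨k - 1, by omega⟩ ⟨6, by omega⟩
  else if (d : ℕ) = 2 then GVert.y ⟨k - 1, by omega⟩ ⟨5, by omega⟩
  else pbG k d

section Generic

variable {V : Type*} (H : SimpleGraph V) (s t : V) (L : ℕ)

/-- Abbreviation: there is a reconfiguration sequence of length exactly `n`. -/
def Recon (p q : Fin (L + 1) → V) (n : ℕ) : Prop :=
  ∃ ρ : ℕ → (Fin (L + 1) → V), SPReconfSeq H s t L ρ n p q

variable {H s t L}

lemma diffOne_symm {N : ℕ} {α : Type*} {p q : Fin N → α} (h : DiffOne p q) : DiffOne q p := by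
  obtain ⟨i, h1, h2⟩ := h
  exact ⟨i, fun h => h1 h.symm, fun j hj => (h2 j hj).symm⟩

lemma recon_refl {p : Fin (L + 1) → V} (hp : IsShortestSTPath H s t L p) :
    Recon H s t L p p 0 :=
  ⟨fun _ => p, rfl, rfl, fun _ _ => hp, fun i hi => absurd hi (by omega)⟩

lemma recon_trans {p q r : Fin (L + 1) → V} {n m : ℕ}
    (h1 : Recon H s t L p q n) (h2 : Recon H s t L q r m) :
    Recon H s t L p r (n + m) := by
  obtain ⟨ρ1, e0, e1, hs1, hd1⟩ := h1
  obtain ⟨ρ2, f0, f1, hs2, hd2⟩ := h2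
  refine ⟨fun i => if i ≤ n then ρ1 i else ρ2 (i - n), by simpa using e0, ?_, ?_, ?_⟩
  · beta_reduce
    by_cases hm : m = 0
    · subst hm; simp only [Nat.add_zero, le_refl, if_pos]
      rw [e1, ← f0, f1]
    · have : ¬ (n + m ≤ n) := by omega
      rw [if_neg this]; simpa using f1
  · intro i hi
    beta_reduce
    by_cases h : i ≤ n
    · rw [if_pos h]; exact hs1 i h
    · rw [if_neg h]; exact hs2 (i - n) (by omega)
  · intro i hi
    beta_reduce
    by_cases h : i + 1 ≤ n
    · rw [if_pos (by omega : i ≤ n), if_pos h]; exact hd1 i (by omega)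
    · by_cases h' : i ≤ n
      · have hin : i = n := by omega
        subst hin
        rw [if_pos le_rfl, if_neg h, e1, ← f0]
        simpa using hd2 0 (by omega)
      · rw [if_neg h', if_neg h]
        have : i - n + 1 = i + 1 - n := by omega
        rw [← this]
        exact hd2 (i - n) (by omega)

lemma recon_symm {p q : Fin (L + 1) → V} {n : ℕ} (h : Recon H s t L p q n) :
    Recon H s t L q p n := by
  obtain ⟨ρ, e0, e1, hs, hd⟩ := h
  refine ⟨fun i => ρ (n - i), by simpa using e1, by simpa using e0,
    fun i hi => hs (n - i) (by omega), ?_⟩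
  intro i hi
  beta_reduce
  have h1 : n - i = (n - (i + 1)) + 1 := by omega
  rw [h1]
  exact diffOne_symm (hd (n - (i + 1)) (by omega))

lemma recon_single {p q : Fin (L + 1) → V}
    (hp : IsShortestSTPath H s t L p) (hq : IsShortestSTPath H s t L q)
    (hd : DiffOne p q) : Recon H s t L p q 1 := by
  refine ⟨fun i => if i = 0 then p else q, by simp, by simp, ?_, ?_⟩
  · intro i _; dsimp only; split <;> [exact hp; exact hq]
  · intro i hi
    have : i = 0 := by omega
    subst this; simpa using hd

/-- From a finite chain of adjacent vertices we get a walk of the same length. -/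
lemma exists_walk_of_chain : ∀ (L : ℕ) (p : Fin (L + 1) → V),
    (∀ i : Fin L, H.Adj (p i.castSucc) (p i.succ)) →
    ∃ w : H.Walk (p 0) (p (Fin.last L)), w.length = L := by
  intro L
  induction L with
  | zero => intro p _; exact ⟨(by rfl : p 0 = p (Fin.last 0)) ▸ SimpleGraph.Walk.nil, rfl⟩
  | succ L ih =>
    intro p hp
    obtain ⟨w, hw⟩ := ih (p ∘ Fin.succ) (fun i => by
      have := hp i.succ
      simpa only [Function.comp_apply, Fin.succ_castSucc] using this)
    have h0 : H.Adj (p 0) ((p ∘ Fin.succ) 0) := by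
      have := hp 0
      simpa using this
    have hlast : (p ∘ Fin.succ) (Fin.last L) = p (Fin.last (L + 1)) := by
      simp [Fin.succ_last]
    refine ⟨SimpleGraph.Walk.cons h0 (hlast ▸ w), ?_⟩
    rw [SimpleGraph.Walk.length_cons]
    have key : ∀ {b : V} (h : (p ∘ Fin.succ) (Fin.last L) = b), (h ▸ w).length = w.length := by
      intro b h; subst h; rfl
    rw [key hlast]
    omega

end Generic

section Dist

variable {k : ℕ}

/-- Depth of a vertex: its distance to `t` along the layered structure. -/
def gdepth {k : ℕ} : GVert k → ℕ
  | GVert.s => 2 * k + 1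
  | GVert.t => 0
  | GVert.x ℓ _ => 2 * (ℓ : ℕ) + 2
  | GVert.y ℓ _ => 2 * (ℓ : ℕ) + 1

lemma gkRel_depth {u v : GVert k} (h : gkRel k u v) : gdepth u = gdepth v + 1 := by
  cases u <;> cases v <;> simp only [gkRel] at h <;> simp only [gdepth]
  · rename_i ℓ i; have := ℓ.isLt; omega
  · rename_i ℓ i ℓ' i'; obtain ⟨h1, _⟩ := h; rw [h1]
  · omega
  · rename_i ℓ i ℓ' i'; omega

lemma adj_depth {u v : GVert k} (h : (Gk k).Adj u v) :
    gdepth u ≤ gdepth v + 1 := by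
  rw [Gk, SimpleGraph.fromRel_adj] at h
  rcases h.2 with h' | h' <;> have := gkRel_depth h' <;> omega


lemma walk_depth_le {u v : GVert k} (w : (Gk k).Walk u v) :
    gdepth u ≤ gdepth v + w.length := by
  induction w with
  | nil => simp
  | cons h w ih =>
    have := adj_depth h
    simp only [SimpleGraph.Walk.length_cons]
    omega


end Dist

section States

/-- Linking condition between the `y`-index at a level and the `x`-index one level below. -/
def linkOK (i j : ℕ) : Prop :=
  i = 0 ∨ i = 2 ∨ i = 4 ∨ (i = 1 ∧ j = 0) ∨ (i = 3 ∧ j = 6) ∨ (i = 5 ∧ j = 0)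

/-- The path determined by a choice of `x`- and `y`-indices at every level. -/
def Pst (k : ℕ) (c : ℕ → ℕ × ℕ) : Fin (2 * k + 1 + 1) → GVert k := fun d =>
  if h0 : (d : ℕ) = 0 then GVert.s
  else if h1 : (d : ℕ) ≤ 2 * k then
    if (d : ℕ) % 2 = 1 then
      GVert.x ⟨k - 1 - ((d : ℕ) - 1) / 2, by omega⟩
        ⟨(c (k - 1 - ((d : ℕ) - 1) / 2)).1 % 7, by omega⟩
    else GVert.y ⟨k - 1 - ((d : ℕ) - 1) / 2, by omega⟩
        ⟨(c (k - 1 - ((d : ℕ) - 1) / 2)).2 % 6, by omega⟩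
  else GVert.t

/-- Validity of a state: in-range indices, `x`–`y` adjacency at each level, and the
linking condition between consecutive levels. -/
def StOK (k : ℕ) (c : ℕ → ℕ × ℕ) : Prop :=
  ∀ ℓ < k, (c ℓ).1 ≤ 6 ∧ (c ℓ).2 ≤ 5 ∧
    ((c ℓ).1 = (c ℓ).2 ∨ (c ℓ).1 = (c ℓ).2 + 1) ∧
    (ℓ + 1 < k → linkOK (c (ℓ + 1)).2 (c ℓ).1)

variable {k : ℕ} {c : ℕ → ℕ × ℕ}

lemma Pst_zero {d : Fin (2 * k + 1 + 1)} (h : (d : ℕ) = 0) : Pst k c d = GVert.s := by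
  simp [Pst, h]

lemma Pst_t {d : Fin (2 * k + 1 + 1)} (h : (d : ℕ) = 2 * k + 1) : Pst k c d = GVert.t := by
  simp only [Pst]
  rw [dif_neg (by omega), dif_neg (by omega)]

lemma Pst_x {d : Fin (2 * k + 1 + 1)} (ℓ : ℕ) (hℓ : ℓ < k) (h : (d : ℕ) = 2 * (k - 1 - ℓ) + 1) :
    Pst k c d = GVert.x ⟨ℓ, hℓ⟩ ⟨(c ℓ).1 % 7, by omega⟩ := by
  have e : k - 1 - ((d : ℕ) - 1) / 2 = ℓ := by omega
  simp only [Pst, e]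
  rw [dif_neg (by omega), dif_pos (by omega), if_pos (by omega)]

lemma Pst_y {d : Fin (2 * k + 1 + 1)} (ℓ : ℕ) (hℓ : ℓ < k) (h : (d : ℕ) = 2 * (k - 1 - ℓ) + 2) :
    Pst k c d = GVert.y ⟨ℓ, hℓ⟩ ⟨(c ℓ).2 % 6, by omega⟩ := by
  have e : k - 1 - ((d : ℕ) - 1) / 2 = ℓ := by omega
  simp only [Pst, e]
  rw [dif_neg (by omega), dif_pos (by omega), if_neg (by omega)]

lemma pbG_eq (k : ℕ) : pbG k = Pst k (fun _ => (0, 0)) := by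
  funext d
  simp only [pbG, Pst]

lemma peG_eq (k : ℕ) (hk : 1 ≤ k) :
    peG k hk = Pst k (Function.update (fun _ => ((0 : ℕ), (0 : ℕ))) (k - 1) (6, 5)) := by
  funext d
  by_cases h1 : (d : ℕ) = 1
  · rw [Pst_x (k - 1) (by omega) (by omega)]
    simp [peG, h1, Function.update]
  · by_cases h2 : (d : ℕ) = 2
    · rw [Pst_y (k - 1) (by omega) (by omega)]
      simp [peG, h1, h2, Function.update]
    · have hd : peG k hk d = pbG k d := by simp [peG, h1, h2]
      rw [hd, pbG_eq]
      by_cases h0 : (d : ℕ) = 0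
      · rw [Pst_zero h0, Pst_zero h0]
      · by_cases ht : (d : ℕ) ≤ 2 * k
        · -- d ≥ 3, level decoded is < k - 1 so update is invisible
          set a := ((d : ℕ) - 1) / 2 with ha
          have haa : 1 ≤ a ∧ a ≤ k - 1 := by omega
          have hne : k - 1 - a ≠ k - 1 := by omega
          by_cases hp : (d : ℕ) % 2 = 1
          · rw [Pst_x (k - 1 - a) (by omega) (by omega), Pst_x (k - 1 - a) (by omega) (by omega)]
            simp [Function.update, hne]
          · rw [Pst_y (k - 1 - a) (by omega) (by omega),
              Pst_y (k - 1 - a) (by omega) (by omega)]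
            simp [Function.update, hne]
        · rw [Pst_t (by omega), Pst_t (by omega)]

lemma gkAdj {u v : GVert k} (h1 : u ≠ v) (h2 : gkRel k u v) : (Gk k).Adj u v := by
  rw [Gk, SimpleGraph.fromRel_adj]; exact ⟨h1, Or.inl h2⟩

lemma Pst_chain (hk : 1 ≤ k) (hc : StOK k c) (i : Fin (2 * k + 1)) :
    (Gk k).Adj (Pst k c i.castSucc) (Pst k c i.succ) := by
  set n := (i : ℕ) with hn
  have hni : n < 2 * k + 1 := i.isLt
  have hcs : ((i.castSucc : Fin (2 * k + 1 + 1)) : ℕ) = n := rfl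
  have hsc : ((i.succ : Fin (2 * k + 1 + 1)) : ℕ) = n + 1 := rfl
  by_cases h0 : n = 0
  · rw [Pst_zero (by omega), Pst_x (k - 1) (by omega) (by omega)]
    exact gkAdj (by simp) (by simp [gkRel])
  · by_cases hp : n % 2 = 1
    · -- x^ℓ → y^ℓ
      set a := (n - 1) / 2 with ha
      have haa : a ≤ k - 1 := by omega
      set ℓ := k - 1 - a with hℓ
      rw [Pst_x ℓ (by omega) (by omega), Pst_y ℓ (by omega) (by omega)]
      obtain ⟨b1, b2, b3, _⟩ := hc ℓ (by omega)
      refine gkAdj (by simp) ?_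
      simp only [gkRel]
      refine ⟨trivial, ?_⟩
      simp only [Nat.mod_eq_of_lt (by omega : (c ℓ).1 < 7), Nat.mod_eq_of_lt (by omega : (c ℓ).2 < 6)]
      omega
    · -- n even, n = 2a with 1 ≤ a ≤ k : y level (k - a)
      set a := n / 2 with ha
      have haa : 1 ≤ a ∧ a ≤ k := by omega
      by_cases hak : a = k
      · rw [Pst_y 0 (by omega) (by omega), Pst_t (by omega)]
        exact gkAdj (by simp) (by simp [gkRel])
      · set ℓ' := k - 1 - a with hℓ'
        have hℓ'k : ℓ' + 1 < k := by omega
        rw [Pst_y (ℓ' + 1) (by omega) (by omega), Pst_x ℓ' (by omega) (by omega)]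
        obtain ⟨b1, b2, b3, _⟩ := hc (ℓ' + 1) (by omega)
        obtain ⟨a1, a2, a3, a4⟩ := hc ℓ' (by omega)
        have hlk := a4 hℓ'k
        refine gkAdj (by simp) ?_
        simp only [gkRel]
        refine ⟨trivial, ?_⟩
        simp only [Nat.mod_eq_of_lt (by omega : (c ℓ').1 < 7),
          Nat.mod_eq_of_lt (by omega : (c (ℓ' + 1)).2 < 6)]
        rcases hlk with h | h | h | h | h | h <;> simp [h]
  

end States

section Dist2

/-- Any `StOK`-style chain gives reachability; here we only need that `dist s t = 2k+1`. -/
lemma gk_dist (k : ℕ) (hk : 1 ≤ k) :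
    (Gk k).dist (GVert.s : GVert k) GVert.t = 2 * k + 1 := by
  have hz : StOK k (fun _ => (0, 0)) := by intro ℓ _; simp [linkOK]
  have hchain : ∀ i : Fin (2 * k + 1), (Gk k).Adj (pbG k i.castSucc) (pbG k i.succ) := by
    rw [pbG_eq]
    exact fun i => Pst_chain hk hz i
  have h0 : pbG k 0 = GVert.s := by simp [pbG]
  have hl : pbG k (Fin.last (2 * k + 1)) = GVert.t := by simp [pbG]
  obtain ⟨w0, hw⟩ := exists_walk_of_chain (2 * k + 1) (pbG k) hchain
  let w := w0.copy h0 hl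
  have hwl : w.length = 2 * k + 1 := by simp [w, hw]
  have hle : (Gk k).dist (GVert.s : GVert k) GVert.t ≤ 2 * k + 1 := by
    have := SimpleGraph.dist_le w
    omega
  have hreach : (Gk k).Reachable (GVert.s : GVert k) GVert.t := ⟨w⟩
  obtain ⟨w', hw'⟩ := hreach.exists_walk_length_eq_dist
  have := walk_depth_le w'
  simp [gdepth] at this
  omega

end Dist2

section States2
variable {k : ℕ} {c : ℕ → ℕ × ℕ}

lemma Pst_shortest (hk : 1 ≤ k) (hc : StOK k c) :
    IsShortestSTPath (Gk k) GVert.s GVert.t (2 * k + 1) (Pst k c) :=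
  ⟨Pst_zero rfl, Pst_t (by simp), Pst_chain hk hc, (gk_dist k hk).symm⟩

end States2

section Moves

variable {k : ℕ} {c c' : ℕ → ℕ × ℕ}

/-- Reconfigurability between states, measured on the induced paths. -/
def StRecon (k : ℕ) (c c' : ℕ → ℕ × ℕ) (n : ℕ) : Prop :=
  Recon (Gk k) GVert.s GVert.t (2 * k + 1) (Pst k c) (Pst k c') n

lemma strecon_trans' {n m : ℕ} (h1 : StRecon k c c' n) {c'' : ℕ → ℕ × ℕ}
    (h2 : StRecon k c' c'' m) : StRecon k c c'' (n + m) := recon_trans h1 h2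

lemma diffOne_of_move {ℓ : ℕ} (hℓ : ℓ < k)
    (hb : (c ℓ).1 ≤ 6 ∧ (c ℓ).2 ≤ 5 ∧ (c' ℓ).1 ≤ 6 ∧ (c' ℓ).2 ≤ 5)
    (hrest : ∀ j, j ≠ ℓ → c' j = c j)
    (hmove : ((c' ℓ).2 = (c ℓ).2 ∧ (c' ℓ).1 ≠ (c ℓ).1) ∨
      ((c' ℓ).1 = (c ℓ).1 ∧ (c' ℓ).2 ≠ (c ℓ).2)) :
    DiffOne (Pst k c) (Pst k c') := by
  obtain ⟨b1, b2, b3, b4⟩ := hb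
  -- the changed position
  have hy2 : ∀ j, (c' j).2 = (c j).2 ∨ j = ℓ := by
    intro j; by_cases h : j = ℓ; · exact Or.inr h
    · exact Or.inl (by rw [hrest j h])
  rcases hmove with ⟨he, hne⟩ | ⟨he, hne⟩
  · refine ⟨⟨2 * (k - 1 - ℓ) + 1, by omega⟩, ?_, ?_⟩
    · rw [Pst_x (c := c) ℓ hℓ rfl, Pst_x (c := c') ℓ hℓ rfl]
      simp only [ne_eq, GVert.x.injEq, Fin.mk.injEq]
      rintro ⟨-, h⟩
      have e1 : (c ℓ).1 % 7 = (c ℓ).1 := Nat.mod_eq_of_lt (by omega)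
      have e2 : (c' ℓ).1 % 7 = (c' ℓ).1 := Nat.mod_eq_of_lt (by omega)
      omega
    · intro j hj
      have hjv : (j : ℕ) ≠ 2 * (k - 1 - ℓ) + 1 := by
        intro h; exact hj (Fin.ext h)
      by_cases h0 : (j : ℕ) = 0
      · rw [Pst_zero h0, Pst_zero h0]
      · by_cases h1 : (j : ℕ) ≤ 2 * k
        · by_cases hp : (j : ℕ) % 2 = 1
          · -- an `x` position at a level ≠ ℓ
            set a := ((j : ℕ) - 1) / 2 with ha
            set ℓ' := k - 1 - a with hℓ'
            have hℓ'2 : ℓ' ≠ ℓ := by omega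
            rw [Pst_x (c := c) ℓ' (by omega) (by omega), Pst_x (c := c') ℓ' (by omega) (by omega)]
            simp only [hrest ℓ' hℓ'2]
          · set a := (j : ℕ) / 2 with ha
            set ℓ' := k - a with hℓ'
            rw [Pst_y (c := c) ℓ' (by omega) (by omega),
              Pst_y (c := c') ℓ' (by omega) (by omega)]
            simp only [GVert.y.injEq, Fin.mk.injEq, true_and]
            rcases hy2 ℓ' with h | h
            · rw [h]
            · rw [h, he]
        · rw [Pst_t (by omega), Pst_t (by omega)]
  · refine ⟨⟨2 * (k - 1 - ℓ) + 2, by omega⟩, ?_, ?_⟩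
    · rw [Pst_y (c := c) ℓ hℓ rfl, Pst_y (c := c') ℓ hℓ rfl]
      simp only [ne_eq, GVert.y.injEq, Fin.mk.injEq]
      rintro ⟨-, h⟩
      have e1 : (c ℓ).2 % 6 = (c ℓ).2 := Nat.mod_eq_of_lt (by omega)
      have e2 : (c' ℓ).2 % 6 = (c' ℓ).2 := Nat.mod_eq_of_lt (by omega)
      omega
    · intro j hj
      have hjv : (j : ℕ) ≠ 2 * (k - 1 - ℓ) + 2 := by
        intro h; exact hj (Fin.ext h)
      by_cases h0 : (j : ℕ) = 0
      · rw [Pst_zero h0, Pst_zero h0]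
      · by_cases h1 : (j : ℕ) ≤ 2 * k
        · by_cases hp : (j : ℕ) % 2 = 1
          · set a := ((j : ℕ) - 1) / 2 with ha
            set ℓ' := k - 1 - a with hℓ'
            rw [Pst_x (c := c) ℓ' (by omega) (by omega), Pst_x (c := c') ℓ' (by omega) (by omega)]
            simp only [GVert.x.injEq, Fin.mk.injEq, true_and]
            by_cases hle : ℓ' = ℓ
            · rw [hle, he]
            · rw [hrest ℓ' hle]
          · set a := (j : ℕ) / 2 with ha
            set ℓ' := k - a with hℓ'
            have hℓ'2 : ℓ' ≠ ℓ := by omega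
            rw [Pst_y (c := c) ℓ' (by omega) (by omega),
              Pst_y (c := c') ℓ' (by omega) (by omega)]
            simp only [hrest ℓ' hℓ'2]
        · rw [Pst_t (by omega), Pst_t (by omega)]

lemma StOK_update (hc : StOK k c) {ℓ : ℕ} (hℓ : ℓ < k) (v : ℕ × ℕ)
    (h1 : v.1 ≤ 6) (h2 : v.2 ≤ 5) (h3 : v.1 = v.2 ∨ v.1 = v.2 + 1)
    (h4 : ℓ + 1 < k → linkOK (c (ℓ + 1)).2 v.1)
    (h5 : 1 ≤ ℓ → linkOK v.2 (c (ℓ - 1)).1) :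
    StOK k (Function.update c ℓ v) := by
  intro m hm
  obtain ⟨a1, a2, a3, a4⟩ := hc m hm
  by_cases e1 : m = ℓ
  · subst e1
    rw [Function.update_self, Function.update_of_ne (by omega)]
    exact ⟨h1, h2, h3, h4⟩
  · rw [Function.update_of_ne e1]
    by_cases e2 : m + 1 = ℓ
    · rw [e2, Function.update_self]
      refine ⟨a1, a2, a3, fun _ => ?_⟩
      have : ℓ - 1 = m := by omega
      rw [← this]
      exact h5 (by omega)
    · rw [Function.update_of_ne e2]
      exact ⟨a1, a2, a3, a4⟩

/-- One reconfiguration step: update a single level to a value differing in one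
coordinate. -/
lemma step_at (hk : 1 ≤ k) {ℓ : ℕ} (hℓ : ℓ < k) (hc : StOK k c) (v : ℕ × ℕ)
    (h1 : v.1 ≤ 6) (h2 : v.2 ≤ 5) (h3 : v.1 = v.2 ∨ v.1 = v.2 + 1)
    (h4 : ℓ + 1 < k → linkOK (c (ℓ + 1)).2 v.1)
    (h5 : 1 ≤ ℓ → linkOK v.2 (c (ℓ - 1)).1)
    (hmove : (v.2 = (c ℓ).2 ∧ v.1 ≠ (c ℓ).1) ∨ (v.1 = (c ℓ).1 ∧ v.2 ≠ (c ℓ).2)) :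
    StOK k (Function.update c ℓ v) ∧ StRecon k c (Function.update c ℓ v) 1 := by
  have hok := StOK_update hc hℓ v h1 h2 h3 h4 h5
  obtain ⟨a1, a2, -, -⟩ := hc ℓ hℓ
  refine ⟨hok, recon_single (Pst_shortest hk hc) (Pst_shortest hk hok) ?_⟩
  refine diffOne_of_move hℓ ⟨a1, a2, ?_, ?_⟩ (fun j hj => Function.update_of_ne hj v c) ?_
  · rw [Function.update_self]; exact h1
  · rw [Function.update_self]; exact h2
  · rw [Function.update_self]; exact hmove

end Moves

section Main

variable {k : ℕ}

lemma strecon_cast {c c' : ℕ → ℕ × ℕ} {n n' : ℕ} (h : StRecon k c c' n) (e : n = n') :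
    StRecon k c c' n' := e ▸ h

lemma linkOK_mem {i j : ℕ} (h : i = 0 ∨ i = 2 ∨ i = 4) : linkOK i j := by
  rcases h with h | h | h <;> simp [linkOK, h]

lemma main_lemma (m : ℕ) (hm : m < k) :
    ∀ c : ℕ → ℕ × ℕ, StOK k c → (∀ ℓ ≤ m, c ℓ = (0, 0)) →
      (m + 1 < k → (c (m + 1)).2 = 0 ∨ (c (m + 1)).2 = 2 ∨ (c (m + 1)).2 = 4) →
      StRecon k c (Function.update c m (6, 5)) (11 * (2 ^ (m + 1) - 1)) := by
  have hk : 1 ≤ k := by omega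
  induction m with
  | zero =>
    intro c hc hz hflex
    have hc0 : c 0 = (0, 0) := hz 0 le_rfl
    have hlup : ∀ v1 : ℕ, 0 + 1 < k → linkOK (c (0 + 1)).2 v1 := fun v1 h =>
      linkOK_mem (hflex h)
    have hno : ∀ v : ℕ × ℕ, (Function.update c 0 v) (0 + 1) = c (0 + 1) :=
      fun v => by rw [Function.update_of_ne (show 0 + 1 ≠ 0 by omega)]
    have hv : ¬(1 ≤ 0) := by omega
    obtain ⟨K1, R1⟩ := step_at hk hm hc (1, 0) (by norm_num) (by norm_num) (by norm_num)
      (fun h => hlup _ h) (fun h => absurd h hv)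
      (Or.inl ⟨by simp [hc0], by simp [hc0]⟩)
    obtain ⟨K2, R2⟩ := step_at hk hm K1 (1, 1) (by norm_num) (by norm_num) (by norm_num)
      (fun h => by rw [hno]; exact hlup _ h) (fun h => absurd h hv)
      (Or.inr ⟨by simp, by simp⟩)
    rw [Function.update_idem] at K2 R2
    obtain ⟨K3, R3⟩ := step_at hk hm K2 (2, 1) (by norm_num) (by norm_num) (by norm_num)
      (fun h => by rw [hno]; exact hlup _ h) (fun h => absurd h hv)
      (Or.inl ⟨by simp, by simp⟩)
    rw [Function.update_idem] at K3 R3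
    obtain ⟨K4, R4⟩ := step_at hk hm K3 (2, 2) (by norm_num) (by norm_num) (by norm_num)
      (fun h => by rw [hno]; exact hlup _ h) (fun h => absurd h hv)
      (Or.inr ⟨by simp, by simp⟩)
    rw [Function.update_idem] at K4 R4
    obtain ⟨K5, R5⟩ := step_at hk hm K4 (3, 2) (by norm_num) (by norm_num) (by norm_num)
      (fun h => by rw [hno]; exact hlup _ h) (fun h => absurd h hv)
      (Or.inl ⟨by simp, by simp⟩)
    rw [Function.update_idem] at K5 R5
    obtain ⟨K6, R6⟩ := step_at hk hm K5 (3, 3) (by norm_num) (by norm_num) (by norm_num)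
      (fun h => by rw [hno]; exact hlup _ h) (fun h => absurd h hv)
      (Or.inr ⟨by simp, by simp⟩)
    rw [Function.update_idem] at K6 R6
    obtain ⟨K7, R7⟩ := step_at hk hm K6 (4, 3) (by norm_num) (by norm_num) (by norm_num)
      (fun h => by rw [hno]; exact hlup _ h) (fun h => absurd h hv)
      (Or.inl ⟨by simp, by simp⟩)
    rw [Function.update_idem] at K7 R7
    obtain ⟨K8, R8⟩ := step_at hk hm K7 (4, 4) (by norm_num) (by norm_num) (by norm_num)
      (fun h => by rw [hno]; exact hlup _ h) (fun h => absurd h hv)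
      (Or.inr ⟨by simp, by simp⟩)
    rw [Function.update_idem] at K8 R8
    obtain ⟨K9, R9⟩ := step_at hk hm K8 (5, 4) (by norm_num) (by norm_num) (by norm_num)
      (fun h => by rw [hno]; exact hlup _ h) (fun h => absurd h hv)
      (Or.inl ⟨by simp, by simp⟩)
    rw [Function.update_idem] at K9 R9
    obtain ⟨K10, R10⟩ := step_at hk hm K9 (5, 5) (by norm_num) (by norm_num) (by norm_num)
      (fun h => by rw [hno]; exact hlup _ h) (fun h => absurd h hv)
      (Or.inr ⟨by simp, by simp⟩)
    rw [Function.update_idem] at K10 R10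
    obtain ⟨K11, R11⟩ := step_at hk hm K10 (6, 5) (by norm_num) (by norm_num) (by norm_num)
      (fun h => by rw [hno]; exact hlup _ h) (fun h => absurd h hv)
      (Or.inl ⟨by simp, by simp⟩)
    rw [Function.update_idem] at K11 R11
    refine strecon_cast (strecon_trans' R1 (strecon_trans' R2 (strecon_trans' R3
      (strecon_trans' R4 (strecon_trans' R5 (strecon_trans' R6 (strecon_trans' R7
      (strecon_trans' R8 (strecon_trans' R9 (strecon_trans' R10 R11)))))))))) (by norm_num)
  | succ m ih =>
    intro c hc hz hflex
    have hmk : m < k := by omega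
    have hm1k : m + 1 < k := hm
    have hcm1 : c (m + 1) = (0, 0) := hz (m + 1) le_rfl
    have hcm : c m = (0, 0) := hz m (by omega)
    have hlup : ∀ v1 : ℕ, m + 1 + 1 < k → linkOK (c (m + 1 + 1)).2 v1 := fun v1 h =>
      linkOK_mem (hflex h)
    have hno : ∀ v : ℕ × ℕ, (Function.update c (m + 1) v) (m + 1 + 1) = c (m + 1 + 1) :=
      fun v => by rw [Function.update_of_ne (show m + 1 + 1 ≠ m + 1 by omega)]
    have hnom : ∀ v : ℕ × ℕ, (Function.update c (m + 1) v) (m + 1 - 1) = c m :=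
      fun v => by rw [show m + 1 - 1 = m from rfl, Function.update_of_ne (show m ≠ m + 1 by omega)]
    -- the first five steps at level m+1
    obtain ⟨K1, R1⟩ := step_at hk hm hc (1, 0) (by norm_num) (by norm_num) (by norm_num)
      (fun h => hlup _ h) (fun _ => by simp [linkOK])
      (Or.inl ⟨by simp [hcm1], by simp [hcm1]⟩)
    obtain ⟨K2, R2⟩ := step_at hk hm K1 (1, 1) (by norm_num) (by norm_num) (by norm_num)
      (fun h => by rw [hno]; exact hlup _ h) (fun _ => by rw [hnom, hcm]; simp [linkOK])
      (Or.inr ⟨by simp, by simp⟩)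
    rw [Function.update_idem] at K2 R2
    obtain ⟨K3, R3⟩ := step_at hk hm K2 (2, 1) (by norm_num) (by norm_num) (by norm_num)
      (fun h => by rw [hno]; exact hlup _ h) (fun _ => by rw [hnom, hcm]; simp [linkOK])
      (Or.inl ⟨by simp, by simp⟩)
    rw [Function.update_idem] at K3 R3
    obtain ⟨K4, R4⟩ := step_at hk hm K3 (2, 2) (by norm_num) (by norm_num) (by norm_num)
      (fun h => by rw [hno]; exact hlup _ h) (fun _ => by simp [linkOK])
      (Or.inr ⟨by simp, by simp⟩)
    rw [Function.update_idem] at K4 R4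
    obtain ⟨K5, R5⟩ := step_at hk hm K4 (3, 2) (by norm_num) (by norm_num) (by norm_num)
      (fun h => by rw [hno]; exact hlup _ h) (fun _ => by simp [linkOK])
      (Or.inl ⟨by simp, by simp⟩)
    rw [Function.update_idem] at K5 R5
    -- first recursive call, based at `update c (m+1) (3,2)`
    have RIH1 := ih hmk (Function.update c (m + 1) (3, 2)) K5
      (fun ℓ hℓ => by rw [Function.update_of_ne (show ℓ ≠ m + 1 by omega)]; exact hz ℓ (by omega))
      (fun _ => by rw [Function.update_self]; exact Or.inr (Or.inl rfl))
    -- validity of the state after the recursive call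
    have KD32 : StOK k (Function.update (Function.update c (m + 1) (3, 2)) m (6, 5)) :=
      StOK_update K5 hmk (6, 5) (by norm_num) (by norm_num) (by norm_num)
        (fun _ => by rw [Function.update_self]; simp [linkOK])
        (fun h => by
          rw [show m - 1 = m - 1 from rfl, Function.update_of_ne (show m - 1 ≠ m + 1 by omega),
            hz (m - 1) (by omega)]
          simp [linkOK])
    have hD : ∀ v w : ℕ × ℕ,
        Function.update (Function.update (Function.update c (m + 1) v) m (6, 5)) (m + 1) w =
          Function.update (Function.update c (m + 1) w) m (6, 5) := fun v w => by
      rw [Function.update_comm (show m ≠ m + 1 by omega), Function.update_idem]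
    have hnoD : ∀ v : ℕ × ℕ,
        (Function.update (Function.update c (m + 1) v) m (6, 5)) (m + 1 + 1) = c (m + 1 + 1) :=
      fun v => by
        rw [Function.update_of_ne (show m + 1 + 1 ≠ m by omega),
          Function.update_of_ne (show m + 1 + 1 ≠ m + 1 by omega)]
    have hnomD : ∀ v : ℕ × ℕ,
        (Function.update (Function.update c (m + 1) v) m (6, 5)) (m + 1 - 1) = (6, 5) :=
      fun v => by rw [show m + 1 - 1 = m from rfl, Function.update_self]
    have hm1D : ∀ v : ℕ × ℕ,
        (Function.update (Function.update c (m + 1) v) m (6, 5)) (m + 1) = v :=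
      fun v => by rw [Function.update_of_ne (show m + 1 ≠ m by omega), Function.update_self]
    -- three steps in the middle
    obtain ⟨K6, R6⟩ := step_at hk hm KD32 (3, 3) (by norm_num) (by norm_num) (by norm_num)
      (fun h => by rw [hnoD]; exact hlup _ h) (fun _ => by rw [hnomD]; simp [linkOK])
      (Or.inr ⟨by rw [hm1D], by rw [hm1D]; simp⟩)
    rw [hD] at K6 R6
    obtain ⟨K7, R7⟩ := step_at hk hm K6 (4, 3) (by norm_num) (by norm_num) (by norm_num)
      (fun h => by rw [hnoD]; exact hlup _ h) (fun _ => by rw [hnomD]; simp [linkOK])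
      (Or.inl ⟨by rw [hm1D], by rw [hm1D]; simp⟩)
    rw [hD] at K7 R7
    obtain ⟨K8, R8⟩ := step_at hk hm K7 (4, 4) (by norm_num) (by norm_num) (by norm_num)
      (fun h => by rw [hnoD]; exact hlup _ h) (fun _ => by rw [hnomD]; simp [linkOK])
      (Or.inr ⟨by rw [hm1D], by rw [hm1D]; simp⟩)
    rw [hD] at K8 R8
    -- second recursive call, based at `update c (m+1) (4,4)`, reversed
    have K44 : StOK k (Function.update c (m + 1) (4, 4)) :=
      StOK_update hc hm (4, 4) (by norm_num) (by norm_num) (by norm_num)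
        (fun h => hlup _ h) (fun _ => by simp [linkOK])
    have RIH2 := recon_symm (ih hmk (Function.update c (m + 1) (4, 4)) K44
      (fun ℓ hℓ => by rw [Function.update_of_ne (show ℓ ≠ m + 1 by omega)]; exact hz ℓ (by omega))
      (fun _ => by rw [Function.update_self]; exact Or.inr (Or.inr rfl)))
    -- final three steps
    obtain ⟨K9, R9⟩ := step_at hk hm K44 (5, 4) (by norm_num) (by norm_num) (by norm_num)
      (fun h => by rw [hno]; exact hlup _ h) (fun _ => by simp [linkOK])
      (Or.inl ⟨by simp, by simp⟩)
    rw [Function.update_idem] at K9 R9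
    obtain ⟨K10, R10⟩ := step_at hk hm K9 (5, 5) (by norm_num) (by norm_num) (by norm_num)
      (fun h => by rw [hno]; exact hlup _ h) (fun _ => by rw [hnom, hcm]; simp [linkOK])
      (Or.inr ⟨by simp, by simp⟩)
    rw [Function.update_idem] at K10 R10
    obtain ⟨K11, R11⟩ := step_at hk hm K10 (6, 5) (by norm_num) (by norm_num) (by norm_num)
      (fun h => by rw [hno]; exact hlup _ h) (fun _ => by rw [hnom, hcm]; simp [linkOK])
      (Or.inl ⟨by simp, by simp⟩)
    rw [Function.update_idem] at K11 R11
    have e : 1 + (1 + (1 + (1 + (1 + (11 * (2 ^ (m + 1) - 1) + (1 + (1 + (1 +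
        (11 * (2 ^ (m + 1) - 1) + (1 + (1 + 1))))))))))) = 11 * (2 ^ (m + 1 + 1) - 1) := by
      have h1 : 1 ≤ 2 ^ (m + 1) := Nat.one_le_two_pow
      have h2 : 2 ^ (m + 1 + 1) = 2 ^ (m + 1) * 2 := pow_succ 2 (m + 1)
      omega
    exact strecon_cast (strecon_trans' R1 (strecon_trans' R2 (strecon_trans' R3
      (strecon_trans' R4 (strecon_trans' R5 (strecon_trans' RIH1 (strecon_trans' R6
      (strecon_trans' R7 (strecon_trans' R8 (strecon_trans' RIH2 (strecon_trans' R9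
      (strecon_trans' R10 R11)))))))))))) e

end Main


/-- the reconfiguration distance in `G^k` between `p^k_b` and `p^k_e` is at
most `11(2^k - 1)`: there is a reconfiguration sequence from `p^k_b` to `p^k_e` of length
at most `11(2^k - 1)`. -/
theorem stmt1 (k : ℕ) (hk : 1 ≤ k) :
    ∃ ℓ ≤ 11 * (2 ^ k - 1), ∃ ρ : ℕ → (Fin (2 * k + 1 + 1) → GVert k),
      SPReconfSeq (Gk k) GVert.s GVert.t (2 * k + 1) ρ ℓ (pbG k) (peG k hk) := by
  have hz : StOK k (fun _ => (0, 0)) := by intro ℓ _; simp [linkOK]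
  have R := main_lemma (k := k) (k - 1) (by omega) (fun _ => (0, 0)) hz
    (fun ℓ _ => rfl) (fun h => absurd h (by omega))
  have ek : k - 1 + 1 = k := by omega
  rw [ek] at R
  refine ⟨11 * (2 ^ k - 1), le_rfl, ?_⟩
  rw [pbG_eq, peG_eq k hk]
  exact R
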